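/- Let k be a field, let f, g ∈ k[X], and let r ∈ k with f(r) = 0, f'(r) ≠ 0 (i.e., r is a simple root of f), and g(r) ≠ 0. Then in the field of formal Laurent series k((X)), the image of the rational function g(X+r)/f(X+r) ∈ k(X) under the canonical embedding has coefficient at degree −1 equal to g(r)/f'(r). -/

import Mathlib

open Polynomial

theorem aux_coe (k : Type*) [Field k] (P : Polynomial k) :
    (@algebraMap (RatFunc k) (LaurentSeries k) _ _ (RatFunc.liftAlgebra k (LaurentSeries k))) (algebraMap (Polynomial k) (RatFunc k) P)
      = HahnSeries.ofPowerSeries ℤ k (P : PowerSeries k) := by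
  exact (RatFunc.coe_coe P).symm

/-- **Residue at a simple root.** If `r` is a simple root of `f` (i.e. `f(r) = 0`
and `f'(r) ≠ 0`) and `g(r) ≠ 0`, then the Laurent expansion of `g/f` about `r`
(i.e. the Laurent series expansion at `0` of `g(X + r)/f(X + r)`) has coefficient
`g(r)/f'(r)` in degree `-1`. -/
theorem residue_at_simple_root (k : Type*) [Field k] (f g : Polynomial k) (r : k)
    (hf0 : f.eval r = 0) (hf' : f.derivative.eval r ≠ 0) (hg : g.eval r ≠ 0) :
    (@algebraMap (RatFunc k) (LaurentSeries k) _ _ (RatFunc.liftAlgebra k (LaurentSeries k))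
        (algebraMap (Polynomial k) (RatFunc k) (g.comp (X + C r)) /
          algebraMap (Polynomial k) (RatFunc k) (f.comp (X + C r)))).coeff
        (-1 : ℤ) = g.eval r / f.derivative.eval r := by
  obtain ⟨q, hq⟩ : (X : Polynomial k) ∣ f.comp (X + C r) := by
    rw [Polynomial.X_dvd_iff, Polynomial.coeff_zero_eq_eval_zero, Polynomial.eval_comp]
    simp [hf0]
  have hq0 : q.coeff 0 = f.derivative.eval r := by
    have h := congrArg (fun p => Polynomial.eval 0 (Polynomial.derivative p)) hq
    simp only [Polynomial.derivative_comp, Polynomial.eval_comp, Polynomial.derivative_mul,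
      Polynomial.derivative_X, Polynomial.derivative_add, Polynomial.derivative_C,
      Polynomial.eval_mul, Polynomial.eval_add, Polynomial.eval_X, Polynomial.eval_C,
      Polynomial.eval_one, Polynomial.eval_zero, one_mul, zero_mul, zero_add, add_zero] at h
    rw [Polynomial.coeff_zero_eq_eval_zero]
    exact h.symm
  have hqc : PowerSeries.constantCoeff (q : PowerSeries k) ≠ 0 := by
    rw [← PowerSeries.coeff_zero_eq_constantCoeff, Polynomial.coeff_coe, hq0]
    exact hf'
  have hofq : HahnSeries.ofPowerSeries ℤ k (q : PowerSeries k) ≠ 0 := by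
    intro h
    apply hqc
    have h0 : (q : PowerSeries k) = 0 :=
      HahnSeries.ofPowerSeries_injective (by rw [h, map_zero])
    rw [h0]; simp
  set A : PowerSeries k := (g.comp (X + C r) : PowerSeries k) with hA
  have hq1 : HahnSeries.ofPowerSeries ℤ k ((q : PowerSeries k)⁻¹)
      * HahnSeries.ofPowerSeries ℤ k (q : PowerSeries k) = 1 := by
    rw [← map_mul, PowerSeries.inv_mul_cancel _ hqc, map_one]
  have hs1 : (HahnSeries.single (-1 : ℤ) (1 : k)) * (HahnSeries.single (1 : ℤ) (1 : k))
      = 1 := by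
    rw [HahnSeries.single_mul_single]
    simp
  have hd : HahnSeries.ofPowerSeries ℤ k (((X * q : Polynomial k) : PowerSeries k))
      = HahnSeries.single (1 : ℤ) (1 : k) * HahnSeries.ofPowerSeries ℤ k (q : PowerSeries k) := by
    push_cast [HahnSeries.ofPowerSeries_X]
    ring
  have hb : HahnSeries.single (1 : ℤ) (1 : k)
      * HahnSeries.ofPowerSeries ℤ k (q : PowerSeries k) ≠ 0 :=
    mul_ne_zero (HahnSeries.single_ne_zero one_ne_zero) hofq
  have key : (@algebraMap (RatFunc k) (LaurentSeries k) _ _ (RatFunc.liftAlgebra k (LaurentSeries k)))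
      (algebraMap (Polynomial k) (RatFunc k) (g.comp (X + C r)) /
        algebraMap (Polynomial k) (RatFunc k) (f.comp (X + C r)))
      = HahnSeries.ofPowerSeries ℤ k (A * (q : PowerSeries k)⁻¹)
        * HahnSeries.single (-1 : ℤ) (1 : k) := by
    rw [map_div₀, aux_coe, aux_coe, hq, hd, div_eq_iff hb, map_mul]
    calc HahnSeries.ofPowerSeries ℤ k A
        = HahnSeries.ofPowerSeries ℤ k A
            * (HahnSeries.ofPowerSeries ℤ k ((q : PowerSeries k)⁻¹)
              * HahnSeries.ofPowerSeries ℤ k (q : PowerSeries k))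
            * (HahnSeries.single (-1 : ℤ) (1 : k) * HahnSeries.single (1 : ℤ) (1 : k)) := by
          rw [hq1, hs1, mul_one, mul_one]
      _ = HahnSeries.ofPowerSeries ℤ k A
            * HahnSeries.ofPowerSeries ℤ k ((q : PowerSeries k)⁻¹)
            * HahnSeries.single (-1 : ℤ) (1 : k)
            * (HahnSeries.single (1 : ℤ) (1 : k)
              * HahnSeries.ofPowerSeries ℤ k (q : PowerSeries k)) := by
          ring
  rw [key]
  have hcoeff : (HahnSeries.ofPowerSeries ℤ k (A * (q : PowerSeries k)⁻¹)
      * HahnSeries.single (-1 : ℤ) (1 : k)).coeff (-1 : ℤ)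
      = (HahnSeries.ofPowerSeries ℤ k (A * (q : PowerSeries k)⁻¹)).coeff ((0 : ℕ) : ℤ) * 1 := by
    have := HahnSeries.coeff_mul_single_add (r := (1:k))
      (x := HahnSeries.ofPowerSeries ℤ k (A * (q : PowerSeries k)⁻¹)) (a := (0:ℤ)) (b := (-1:ℤ))
    simpa using this
  rw [hcoeff, mul_one, HahnSeries.ofPowerSeries_apply_coeff]
  rw [PowerSeries.coeff_zero_eq_constantCoeff, map_mul, PowerSeries.constantCoeff_inv]
  rw [← PowerSeries.coeff_zero_eq_constantCoeff]
  rw [hA, Polynomial.coeff_coe, Polynomial.coeff_coe, hq0,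
    Polynomial.coeff_zero_eq_eval_zero, Polynomial.eval_comp]
  simp [div_eq_mul_inv]
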